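/- For any two matrices A (a×m) and B (b×m) over a field, the rank of the vertical stack [A; B] equals rank(A) plus the dimension of the image of the null space of A under B, i.e., rank([A;B]) = rank(A) + dim(B·N(A)), where B·N(A) = {Bx : Ax = 0}. -/
import Mathlib


/-- Rank of a vertical stack: rank([A;B]) = rank(A) + dim(B·N(A)). -/
theorem rank_fromRows_eq_rank_add_dim_image_ker
    {𝔽 : Type*} [Field 𝔽] {a b m : ℕ}
    (A : Matrix (Fin a) (Fin m) 𝔽) (B : Matrix (Fin b) (Fin m) 𝔽) :
    (Matrix.fromRows A B).rank =
      A.rank + Module.finrank 𝔽 ((LinearMap.ker A.mulVecLin).map B.mulVecLin) := by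
  classical
  set Ka := LinearMap.ker A.mulVecLin
  set Kb := LinearMap.ker B.mulVecLin
  have hker : LinearMap.ker (Matrix.fromRows A B).mulVecLin = Ka ⊓ Kb := by
    ext x
    simp [Ka, Kb, Matrix.mulVecLin, Matrix.fromRows_mulVec, funext_iff, Sum.forall]
  have h1 : (Matrix.fromRows A B).rank + Module.finrank 𝔽 ↥(Ka ⊓ Kb) = m := by
    rw [Matrix.rank, ← hker]
    simpa using LinearMap.finrank_range_add_finrank_ker (Matrix.fromRows A B).mulVecLin
  have h2 : A.rank + Module.finrank 𝔽 Ka = m := by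
    rw [Matrix.rank]
    simpa using LinearMap.finrank_range_add_finrank_ker A.mulVecLin
  have h3 : Module.finrank 𝔽 (Ka.map B.mulVecLin) + Module.finrank 𝔽 ↥(Ka ⊓ Kb) =
      Module.finrank 𝔽 Ka := by
    have := LinearMap.finrank_range_add_finrank_ker (B.mulVecLin.domRestrict Ka)
    rw [LinearMap.range_domRestrict, LinearMap.ker_domRestrict] at this
    have hcomap : Kb.comap Ka.subtype = (Ka ⊓ Kb).comap Ka.subtype := by
      ext ⟨x, hx⟩
      simp [hx]
    rw [hcomap] at this
    have heq : Module.finrank 𝔽 ((Ka ⊓ Kb).comap Ka.subtype) = Module.finrank 𝔽 ↥(Ka ⊓ Kb) :=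
      (Submodule.comapSubtypeEquivOfLe inf_le_left).finrank_eq
    rw [heq] at this
    simpa using this
  omega
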